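/- arXiv:2406.17125 — 2 statements merged into one kernel-verified Lean document; each statement's English description precedes it below -/
import Mathlib

section
/- Let ρ_t(x,y) = (ψ * φ_t^d)(x) · φ_t^{D-d}(y) on ℝ^d × ℝ^{D-d}, where ψ : ℝ^d → ℝ is bounded and continuous. Then for all t > 0 and (x,y), Δρ_t(x,y) = (‖y‖²/t² + (d−D)/t)·ρ_t(x,y) + φ_t^{D-d}(y) · Δ_x(ψ * φ_t^d)(x), where Δ = Δ_x + Δ_y is the Laplacian on ℝ^D. -/
open MeasureTheory Real Filter Set Topology

/-- Density of the centered Gaussian on `ℝ^n` with covariance `t • I`. -/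
noncomputable def gauss (n : ℕ) (t : ℝ) (x : EuclideanSpace ℝ (Fin n)) : ℝ :=
  (2 * π * t) ^ (-(n : ℝ) / 2) * Real.exp (-‖x‖ ^ 2 / (2 * t))

/-- One-dimensional centered Gaussian density with variance `t`. -/
noncomputable def gauss1 (t u : ℝ) : ℝ :=
  (2 * π * t) ^ (-(1 : ℝ) / 2) * Real.exp (-u ^ 2 / (2 * t))

/-- Euclidean Laplacian: sum of second derivatives along coordinate directions. -/
noncomputable def laplacian {n : ℕ} (f : EuclideanSpace ℝ (Fin n) → ℝ)
    (x : EuclideanSpace ℝ (Fin n)) : ℝ :=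
  ∑ i : Fin n, iteratedDeriv 2 (fun s : ℝ => f (x + s • EuclideanSpace.single i 1)) 0

/-- Convolution of two functions on `ℝ^n`. -/
noncomputable def conv' {n : ℕ} (f g : EuclideanSpace ℝ (Fin n) → ℝ)
    (x : EuclideanSpace ℝ (Fin n)) : ℝ :=
  ∫ y, f y * g (x - y)

/-- Convolution of two functions on `ℝ`. -/
noncomputable def conv1 (f g : ℝ → ℝ) (x : ℝ) : ℝ :=
  ∫ y, f y * g (x - y)

lemma iteratedDeriv_two_exp_quad (A B b c : ℝ) :
    iteratedDeriv 2 (fun s : ℝ => A * Real.exp (B + b * s + c * s ^ 2)) 0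
      = A * (b ^ 2 + 2 * c) * Real.exp B := by
  have hq : ∀ s : ℝ, HasDerivAt (fun s : ℝ => B + b * s + c * s ^ 2) (b + 2 * c * s) s := by
    intro s
    have h1 : HasDerivAt (fun s : ℝ => B + b * s + c * s ^ 2) (0 + b + c * (2 * s)) s := by
      exact (((hasDerivAt_const s B).add ((hasDerivAt_id s).const_mul b)).add
        (((hasDerivAt_pow 2 s)).const_mul c)).congr_deriv (by ring)
    exact h1.congr_deriv (by ring)
  have hd1 : ∀ s : ℝ, HasDerivAt (fun s : ℝ => A * Real.exp (B + b * s + c * s ^ 2))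
      (A * ((b + 2 * c * s) * Real.exp (B + b * s + c * s ^ 2))) s := by
    intro s
    exact ((hq s).exp.const_mul A).congr_deriv (by ring)
  have hD1 : deriv (fun s : ℝ => A * Real.exp (B + b * s + c * s ^ 2))
      = fun s => A * ((b + 2 * c * s) * Real.exp (B + b * s + c * s ^ 2)) :=
    funext fun s => (hd1 s).deriv
  rw [iteratedDeriv_succ, iteratedDeriv_one, hD1]
  have hd2 : HasDerivAt (fun s : ℝ => A * ((b + 2 * c * s) * Real.exp (B + b * s + c * s ^ 2)))
      (A * (b ^ 2 + 2 * c) * Real.exp B) 0 := by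
    have hg : HasDerivAt (fun s : ℝ => b + 2 * c * s) (2 * c) 0 := by
      simpa using ((hasDerivAt_id (0:ℝ)).const_mul (2*c)).const_add b
    have := (hg.mul (hq 0).exp).const_mul A
    apply this.congr_deriv
    simp; ring
  rw [hd2.deriv]

lemma norm_add_smul_single_sq {n : ℕ} (y : EuclideanSpace ℝ (Fin n)) (i : Fin n) (s : ℝ) :
    ‖y + s • EuclideanSpace.single i (1:ℝ)‖ ^ 2 = ‖y‖ ^ 2 + 2 * (y i) * s + s ^ 2 := by
  have h := norm_add_sq_real y (s • EuclideanSpace.single i (1:ℝ))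
  rw [h, real_inner_smul_right, EuclideanSpace.inner_single_right]
  have : ‖s • EuclideanSpace.single i (1:ℝ)‖ = |s| := by
    rw [norm_smul, EuclideanSpace.norm_single]; simp
  rw [this]
  simp [sq_abs]; ring

lemma lap_gauss (n : ℕ) (t : ℝ) (ht : 0 < t) (y : EuclideanSpace ℝ (Fin n)) :
    laplacian (gauss n t) y = (‖y‖ ^ 2 / t ^ 2 - n / t) * gauss n t y := by
  have ht' : (2 * t) ≠ 0 := by positivity
  have hterm : ∀ i : Fin n,
      iteratedDeriv 2 (fun s : ℝ => gauss n t (y + s • EuclideanSpace.single i 1)) 0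
        = ((y i) ^ 2 / t ^ 2 - 1 / t) * gauss n t y := by
    intro i
    have hfun : (fun s : ℝ => gauss n t (y + s • EuclideanSpace.single i 1))
        = fun s : ℝ => (2 * π * t) ^ (-(n : ℝ) / 2) *
            Real.exp ((-‖y‖ ^ 2 / (2 * t)) + (-(y i) / t) * s + (-(1 / (2 * t))) * s ^ 2) := by
      funext s
      rw [gauss, norm_add_smul_single_sq]
      congr 1
      field_simp
      ring
    rw [hfun, iteratedDeriv_two_exp_quad]
    rw [gauss]
    have : (-(y i) / t) ^ 2 + 2 * (-(1 / (2 * t))) = (y i) ^ 2 / t ^ 2 - 1 / t := by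
      field_simp; ring
    rw [this]; ring
  rw [laplacian]
  simp only [hterm]
  rw [← Finset.sum_mul]
  congr 1
  have hnorm : ‖y‖ ^ 2 = ∑ i, (y i) ^ 2 := by
    rw [EuclideanSpace.norm_eq, Real.sq_sqrt (by positivity)]
    simp [sq_abs]
  rw [Finset.sum_sub_distrib, ← Finset.sum_div, ← hnorm]
  simp [Finset.sum_const, Finset.card_univ, nsmul_eq_mul, mul_one_div, div_eq_mul_inv]

lemma lap_mul_const {n : ℕ} (f : EuclideanSpace ℝ (Fin n) → ℝ) (c : ℝ)
    (x : EuclideanSpace ℝ (Fin n)) :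
    laplacian (fun x' => f x' * c) x = c * laplacian f x := by
  rw [laplacian, laplacian, Finset.mul_sum]
  congr 1; funext i
  have h : (fun s : ℝ => f (x + s • EuclideanSpace.single i 1) * c)
      = fun s : ℝ => c * f (x + s • EuclideanSpace.single i 1) := by
    funext s; ring
  rw [h]
  simp only [iteratedDeriv_succ, iteratedDeriv_zero]
  rw [deriv_const_mul_field', deriv_const_mul_field]

lemma lap_const_mul {n : ℕ} (f : EuclideanSpace ℝ (Fin n) → ℝ) (c : ℝ)
    (x : EuclideanSpace ℝ (Fin n)) :
    laplacian (fun x' => c * f x') x = c * laplacian f x := by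
  have : (fun x' => c * f x') = fun x' => f x' * c := by funext x'; ring
  rw [this, lap_mul_const]

theorem laplacian_diffused_density (d D : ℕ) (hd : 0 < d) (hdD : d < D)
    (ψ : EuclideanSpace ℝ (Fin d) → ℝ) (hcont : Continuous ψ)
    (hbdd : ∃ M, ∀ z, |ψ z| ≤ M) (t : ℝ) (ht : 0 < t)
    (x : EuclideanSpace ℝ (Fin d)) (y : EuclideanSpace ℝ (Fin (D - d))) :
    laplacian (fun x' => conv' ψ (gauss d t) x' * gauss (D - d) t y) x
      + laplacian (fun y' => conv' ψ (gauss d t) x * gauss (D - d) t y') y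
    = (‖y‖ ^ 2 / t ^ 2 + ((d : ℝ) - D) / t) * (conv' ψ (gauss d t) x * gauss (D - d) t y)
      + gauss (D - d) t y * laplacian (conv' ψ (gauss d t)) x := by
  have hm : ((D - d : ℕ) : ℝ) = (D : ℝ) - d := by
    rw [Nat.cast_sub hdD.le]
  rw [lap_mul_const, lap_const_mul, lap_gauss _ t ht, hm]
  ring
end

section
/- If ψ : ℝ^d → ℝ is a bounded, twice continuously differentiable probability density with bounded first and second partial derivatives, then for any x with ψ(x) > 0, lim_{t→0⁺} t·Δ_x(ψ * φ_t^d)(x)/(ψ * φ_t^d)(x) = 0; hence lim_{t→0⁺} β_t(x) = d − D. -/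
open MeasureTheory Real Filter Set Topology

section AuxGauss

lemma gauss_pos {d : ℕ} {t : ℝ} (ht : 0 < t) (x : EuclideanSpace ℝ (Fin d)) :
    0 < gauss d t x := by
  have h2 : 0 < 2 * π * t := by positivity
  exact mul_pos (Real.rpow_pos_of_pos h2 _) (Real.exp_pos _)

lemma gauss_continuous (d : ℕ) (t : ℝ) : Continuous (gauss d t) := by
  unfold gauss
  exact continuous_const.mul (Real.continuous_exp.comp
    (((continuous_norm.pow 2).neg).div_const _))

lemma integrable_gauss_one (d : ℕ) : Integrable (gauss d 1) := by
  have h0 := GaussianFourier.integrable_cexp_neg_mul_sq_norm_add (V := EuclideanSpace ℝ (Fin d))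
      (b := (1/2 : ℂ)) (by norm_num) 0 0
  have h1 : Integrable (fun v : EuclideanSpace ℝ (Fin d) => rexp (-‖v‖ ^ 2 / 2)) := by
    have h2 := h0.norm
    refine h2.congr (Eventually.of_forall fun v => ?_)
    simp only [Complex.norm_exp]
    congr 1
    simp [Complex.add_re, Complex.mul_re]
    norm_cast
    ring
  have h3 := h1.const_mul ((2 * π * 1 : ℝ) ^ (-(d : ℝ) / 2))
  refine h3.congr (Eventually.of_forall fun v => ?_)
  unfold gauss
  norm_num

lemma gauss_scale {d : ℕ} {t : ℝ} (ht : 0 < t) (w : EuclideanSpace ℝ (Fin d)) :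
    (Real.sqrt t ^ d) * gauss d t (Real.sqrt t • w) = gauss d 1 w := by
  unfold gauss
  have hn : ‖Real.sqrt t • w‖ ^ 2 = t * ‖w‖ ^ 2 := by
    rw [norm_smul, mul_pow, Real.norm_eq_abs, sq_abs, Real.sq_sqrt ht.le]
  rw [hn]
  have harg : -(t * ‖w‖ ^ 2) / (2 * t) = -‖w‖ ^ 2 / (2 * 1) := by
    rw [mul_one]
    field_simp
  rw [harg, ← mul_assoc]
  congr 1
  rw [mul_one, Real.sqrt_eq_rpow, ← Real.rpow_natCast (t ^ (1/2 : ℝ)) d,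
    ← Real.rpow_mul ht.le, Real.mul_rpow (by positivity) ht.le, mul_left_comm,
    ← Real.rpow_add ht]
  have he : (1/2 : ℝ) * (d : ℝ) + (-(d : ℝ) / 2) = 0 := by ring
  rw [he, Real.rpow_zero, mul_one]

lemma conv_eq {d : ℕ} (ψ : EuclideanSpace ℝ (Fin d) → ℝ) {t : ℝ} (ht : 0 < t)
    (x : EuclideanSpace ℝ (Fin d)) :
    conv' ψ (gauss d t) x = ∫ w, gauss d 1 w * ψ (x - Real.sqrt t • w) := by
  have A : conv' ψ (gauss d t) x = ∫ z, ψ (x - z) * gauss d t z := by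
    rw [conv', ← integral_sub_left_eq_self (fun z => ψ (x - z) * gauss d t z) volume x]
    simp [sub_sub_cancel]
  rw [A]
  have hs : (0 : ℝ) < Real.sqrt t ^ d := by positivity
  have B := MeasureTheory.Measure.integral_comp_smul_of_nonneg
      (volume : Measure (EuclideanSpace ℝ (Fin d)))
      (fun z => ψ (x - z) * gauss d t z) (Real.sqrt t) (hR := Real.sqrt_nonneg t)
  rw [finrank_euclideanSpace_fin] at B
  have C : (∫ z, ψ (x - z) * gauss d t z)
      = (Real.sqrt t ^ d) • ∫ w, ψ (x - Real.sqrt t • w) * gauss d t (Real.sqrt t • w) := by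
    rw [B, smul_smul, mul_inv_cancel₀ hs.ne', one_smul]
  rw [C, ← integral_smul]
  congr 1
  funext w
  rw [smul_eq_mul, mul_left_comm, gauss_scale ht, mul_comm]

lemma norm_mul_le_of_abs_le {M a b : ℝ} (ha : 0 ≤ a) (hb : |b| ≤ M) : ‖a * b‖ ≤ a * M := by
  rw [Real.norm_eq_abs, abs_mul, abs_of_nonneg ha]
  exact mul_le_mul_of_nonneg_left hb ha

lemma tendsto_denom {d : ℕ} (ψ : EuclideanSpace ℝ (Fin d) → ℝ) (hc : Continuous ψ)
    {M : ℝ} (hM : ∀ z, |ψ z| ≤ M) (x : EuclideanSpace ℝ (Fin d)) :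
    Tendsto (fun t => ∫ w, gauss d 1 w * ψ (x - Real.sqrt t • w)) (𝓝[>] (0 : ℝ))
      (𝓝 ((∫ w, gauss d 1 w) * ψ x)) := by
  rw [← integral_mul_const]
  refine tendsto_integral_filter_of_dominated_convergence (fun w => gauss d 1 w * M)
    (Eventually.of_forall fun t => ?_) (Eventually.of_forall fun t => ?_) ?_ ?_
  · exact ((gauss_continuous d 1).mul
      (hc.comp (continuous_const.sub (continuous_const_smul _)))).aestronglyMeasurable
  · exact Eventually.of_forall fun w =>
      norm_mul_le_of_abs_le (gauss_pos one_pos w).le (hM _)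
  · exact (integrable_gauss_one d).mul_const M
  · refine Eventually.of_forall fun w => ?_
    have h1 : Tendsto (fun t : ℝ => Real.sqrt t) (𝓝[>] 0) (𝓝 0) := by
      have := Real.continuous_sqrt.tendsto 0
      rw [Real.sqrt_zero] at this
      exact this.mono_left nhdsWithin_le_nhds
    have h2 : Tendsto (fun t : ℝ => x - Real.sqrt t • w) (𝓝[>] 0) (𝓝 x) := by
      have h3 : Tendsto (fun t : ℝ => x - Real.sqrt t • w) (𝓝[>] (0:ℝ))
          (𝓝 (x - (0:ℝ) • w)) := Tendsto.sub tendsto_const_nhds (h1.smul_const w)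
      simpa using h3
    exact tendsto_const_nhds.mul ((hc.tendsto x).comp h2)

lemma lap_bound {d : ℕ} (ψ : EuclideanSpace ℝ (Fin d) → ℝ) (hsmooth : ContDiff ℝ 2 ψ)
    {M : ℝ} (hM : ∀ z, |ψ z| ≤ M ∧ ‖fderiv ℝ ψ z‖ ≤ M ∧ ‖iteratedFDeriv ℝ 2 ψ z‖ ≤ M)
    (x : EuclideanSpace ℝ (Fin d)) {t : ℝ} (ht : 0 < t) :
    |laplacian (conv' ψ (gauss d t)) x| ≤ d * ((∫ w, gauss d 1 w) * M) := by
  classical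
  set g1 : EuclideanSpace ℝ (Fin d) → ℝ := gauss d 1 with hg1
  have hψd : Differentiable ℝ ψ := hsmooth.differentiable (by norm_num)
  set A := fderiv ℝ ψ with hAdef
  have hA : ContDiff ℝ 1 A := hsmooth.fderiv_right (by norm_num)
  have hAd : Differentiable ℝ A := hA.differentiable one_ne_zero
  have boundInt : Integrable (fun w => g1 w * M) := (integrable_gauss_one d).mul_const M
  have g1nn : ∀ w, 0 ≤ g1 w := fun w => (gauss_pos one_pos w).le
  -- per-coordinate bound
  have key : ∀ i : Fin d,
      |iteratedDeriv 2
        (fun s : ℝ => conv' ψ (gauss d t) (x + s • EuclideanSpace.single i 1)) 0|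
        ≤ (∫ w, gauss d 1 w) * M := by
    intro i
    set v : EuclideanSpace ℝ (Fin d) := EuclideanSpace.single i 1 with hvdef
    have hv : ‖v‖ = 1 := by simp [hvdef]
    set p : ℝ → EuclideanSpace ℝ (Fin d) → EuclideanSpace ℝ (Fin d) :=
      fun s w => x + s • v - Real.sqrt t • w with hpdef
    have hp : ∀ (s : ℝ) w, HasDerivAt (fun s => p s w) v s := by
      intro s w
      have h := ((((hasDerivAt_id s).smul_const v).const_add x).sub_const
        (Real.sqrt t • w))
      simpa [hpdef] using h
    have hd1 : ∀ (s : ℝ) w, HasDerivAt (fun s => ψ (p s w)) (A (p s w) v) s :=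
      fun s w => (hψd (p s w)).hasFDerivAt.comp_hasDerivAt s (hp s w)
    have hd2 : ∀ (s : ℝ) w,
        HasDerivAt (fun s => A (p s w) v) (fderiv ℝ A (p s w) v v) s := by
      intro s w
      have h1 : HasDerivAt (fun s => A (p s w)) (fderiv ℝ A (p s w) v) s :=
        (hAd (p s w)).hasFDerivAt.comp_hasDerivAt s (hp s w)
      have h2 := (ContinuousLinearMap.apply ℝ ℝ v).hasFDerivAt.comp_hasDerivAt s h1
      exact h2
    have hb1 : ∀ (s : ℝ) w, |A (p s w) v| ≤ M := by
      intro s w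
      calc |A (p s w) v| ≤ ‖A (p s w)‖ * ‖v‖ := (A (p s w)).le_opNorm v
        _ = ‖A (p s w)‖ := by rw [hv, mul_one]
        _ ≤ M := (hM (p s w)).2.1
    have hb2 : ∀ (s : ℝ) w, |fderiv ℝ A (p s w) v v| ≤ M := by
      intro s w
      have he : fderiv ℝ A (p s w) v v = iteratedFDeriv ℝ 2 ψ (p s w) ![v, v] := by
        rw [iteratedFDeriv_two_apply]
        simp [hAdef]
      rw [he]
      calc |iteratedFDeriv ℝ 2 ψ (p s w) ![v, v]|
          ≤ ‖iteratedFDeriv ℝ 2 ψ (p s w)‖ * ∏ j, ‖(![v, v]) j‖ :=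
            (iteratedFDeriv ℝ 2 ψ (p s w)).le_opNorm _
        _ = ‖iteratedFDeriv ℝ 2 ψ (p s w)‖ := by
            simp [Fin.prod_univ_two, hv]
        _ ≤ M := (hM (p s w)).2.2
    have contp : ∀ s : ℝ, Continuous fun w => p s w :=
      fun s => continuous_const.sub (continuous_const_smul _)
    have meas0 : ∀ s : ℝ, AEStronglyMeasurable (fun w => g1 w * ψ (p s w)) volume :=
      fun s => ((gauss_continuous d 1).mul
        (hsmooth.continuous.comp (contp s))).aestronglyMeasurable
    have meas1 : ∀ s : ℝ, AEStronglyMeasurable (fun w => g1 w * (A (p s w) v)) volume := by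
      intro s
      exact ((gauss_continuous d 1).mul
        ((ContinuousLinearMap.apply ℝ ℝ v).continuous.comp
          ((hA.continuous).comp (contp s)))).aestronglyMeasurable
    have intF : ∀ s : ℝ, Integrable (fun w => g1 w * ψ (p s w)) :=
      fun s => Integrable.mono' boundInt (meas0 s)
        (Eventually.of_forall fun w => norm_mul_le_of_abs_le (g1nn w) (hM _).1)
    have intF1 : ∀ s : ℝ, Integrable (fun w => g1 w * (A (p s w) v)) :=
      fun s => Integrable.mono' boundInt (meas1 s)
        (Eventually.of_forall fun w => norm_mul_le_of_abs_le (g1nn w) (hb1 s w))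
    have D1 : ∀ s : ℝ, HasDerivAt (fun s => ∫ w, g1 w * ψ (p s w))
        (∫ w, g1 w * (A (p s w) v)) s := by
      intro s
      have h := hasDerivAt_integral_of_dominated_loc_of_deriv_le (μ := volume)
        (F := fun s w => g1 w * ψ (p s w)) (F' := fun s w => g1 w * (A (p s w) v))
        (x₀ := s) (bound := fun w => g1 w * M) (s := Metric.ball s 1) (Metric.ball_mem_nhds s one_pos)
        (Eventually.of_forall fun s' => meas0 s') (intF s) (meas1 s)
        (Eventually.of_forall fun w s' _ => norm_mul_le_of_abs_le (g1nn w) (hb1 s' w))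
        boundInt
        (Eventually.of_forall fun w s' _ => HasDerivAt.const_mul (g1 w) (hd1 s' w))
      exact h.2
    have D2 : ∀ s : ℝ, HasDerivAt (fun s => ∫ w, g1 w * (A (p s w) v))
        (∫ w, g1 w * (fderiv ℝ A (p s w) v v)) s := by
      intro s
      have meas2 : AEStronglyMeasurable (fun w => g1 w * (fderiv ℝ A (p s w) v v)) volume := by
        refine ((gauss_continuous d 1).mul ?_).aestronglyMeasurable
        exact (ContinuousLinearMap.apply ℝ ℝ v).continuous.comp
          (((ContinuousLinearMap.apply ℝ (EuclideanSpace ℝ (Fin d) →L[ℝ] ℝ) v).continuous.comp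
            ((hA.continuous_fderiv one_ne_zero).comp (contp s))))
      have h := hasDerivAt_integral_of_dominated_loc_of_deriv_le (μ := volume)
        (F := fun s w => g1 w * (A (p s w) v))
        (F' := fun s w => g1 w * (fderiv ℝ A (p s w) v v))
        (x₀ := s) (bound := fun w => g1 w * M) (s := Metric.ball s 1) (Metric.ball_mem_nhds s one_pos)
        (Eventually.of_forall fun s' => meas1 s') (intF1 s) meas2
        (Eventually.of_forall fun w s' _ => norm_mul_le_of_abs_le (g1nn w) (hb2 s' w))
        boundInt
        (Eventually.of_forall fun w s' _ => HasDerivAt.const_mul (g1 w) (hd2 s' w))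
      exact h.2
    have heq : (fun s : ℝ => conv' ψ (gauss d t) (x + s • v))
        = fun s => ∫ w, g1 w * ψ (p s w) :=
      funext fun s => conv_eq ψ ht (x + s • v)
    rw [heq]
    have e1 : deriv (fun s => ∫ w, g1 w * ψ (p s w))
        = fun s => ∫ w, g1 w * (A (p s w) v) := funext fun s => (D1 s).deriv
    have hIter : iteratedDeriv 2 (fun s => ∫ w, g1 w * ψ (p s w)) 0
        = ∫ w, g1 w * (fderiv ℝ A (p 0 w) v v) := by
      rw [iteratedDeriv_succ, iteratedDeriv_one, e1]
      exact (D2 0).deriv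
    rw [hIter]
    calc |∫ w, g1 w * (fderiv ℝ A (p 0 w) v v)| ≤ ∫ w, g1 w * M :=
        norm_integral_le_of_norm_le boundInt
          (Eventually.of_forall fun w => norm_mul_le_of_abs_le (g1nn w) (hb2 0 w))
      _ = (∫ w, gauss d 1 w) * M := integral_mul_const _ _
  calc |laplacian (conv' ψ (gauss d t)) x|
      ≤ ∑ i : Fin d, |iteratedDeriv 2
          (fun s : ℝ => conv' ψ (gauss d t) (x + s • EuclideanSpace.single i 1)) 0| :=
        Finset.abs_sum_le_sum_abs _ _
    _ ≤ ∑ _i : Fin d, (∫ w, gauss d 1 w) * M := Finset.sum_le_sum fun i _ => key i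
    _ = d * ((∫ w, gauss d 1 w) * M) := by
        rw [Finset.sum_const, Finset.card_univ, Fintype.card_fin, nsmul_eq_mul]

end AuxGauss

theorem beta_nice_density (d D : ℕ) (hd : 0 < d) (hdD : d < D)
    (ψ : EuclideanSpace ℝ (Fin d) → ℝ) (hsmooth : ContDiff ℝ 2 ψ)
    (hbdd : ∃ M, ∀ z, |ψ z| ≤ M ∧ ‖fderiv ℝ ψ z‖ ≤ M ∧ ‖iteratedFDeriv ℝ 2 ψ z‖ ≤ M)
    (hnn : ∀ z, 0 ≤ ψ z) (hint : ∫ z, ψ z = 1)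
    (x : EuclideanSpace ℝ (Fin d)) (hx : 0 < ψ x) :
    Filter.Tendsto
      (fun t => t * laplacian (conv' ψ (gauss d t)) x / conv' ψ (gauss d t) x)
      (nhdsWithin 0 (Set.Ioi 0)) (nhds 0) ∧
    Filter.Tendsto
      (fun t => (d : ℝ) - D
        + t * laplacian (conv' ψ (gauss d t)) x / conv' ψ (gauss d t) x)
      (nhdsWithin 0 (Set.Ioi 0)) (nhds ((d : ℝ) - D)) := by
  obtain ⟨M, hM⟩ := hbdd
  set I : ℝ := ∫ w, gauss d 1 w with hI
  have Ipos : 0 < I := by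
    rw [hI]
    rw [integral_pos_iff_support_of_nonneg_ae
      (Eventually.of_forall fun w => (gauss_pos one_pos w).le) (integrable_gauss_one d)]
    have hsupp : Function.support (gauss d 1) = Set.univ :=
      Set.eq_univ_of_forall fun w => (gauss_pos one_pos w).ne'
    rw [hsupp]
    exact isOpen_univ.measure_pos volume ⟨0, trivial⟩
  have hden : Tendsto (fun t => conv' ψ (gauss d t) x) (𝓝[>] (0 : ℝ)) (𝓝 (I * ψ x)) := by
    refine Tendsto.congr' ?_ (tendsto_denom ψ hsmooth.continuous (fun z => (hM z).1) x)
    exact eventually_mem_nhdsWithin.mono fun t ht => (conv_eq ψ ht x).symm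
  have hnum : Tendsto (fun t => t * laplacian (conv' ψ (gauss d t)) x) (𝓝[>] (0 : ℝ))
      (𝓝 0) := by
    have hev : ∀ᶠ t in 𝓝[>] (0 : ℝ),
        ‖t * laplacian (conv' ψ (gauss d t)) x‖ ≤ t * (d * (I * M)) := by
      refine eventually_mem_nhdsWithin.mono fun t ht => ?_
      have ht' : (0 : ℝ) < t := ht
      rw [Real.norm_eq_abs, abs_mul, abs_of_pos ht']
      exact mul_le_mul_of_nonneg_left (lap_bound ψ hsmooth hM x ht') ht'.le
    have hC : Tendsto (fun t : ℝ => t * (d * (I * M))) (𝓝[>] (0 : ℝ)) (𝓝 0) := by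
      have h3 : Tendsto (fun t : ℝ => t * ((d : ℝ) * (I * M))) (𝓝 (0:ℝ))
          (𝓝 (0 * ((d : ℝ) * (I * M)))) := (continuous_id.mul continuous_const).tendsto 0
      rw [zero_mul] at h3
      exact h3.mono_left nhdsWithin_le_nhds
    exact squeeze_zero_norm' hev hC
  have hne : I * ψ x ≠ 0 := (mul_pos Ipos hx).ne'
  have h1 : Tendsto
      (fun t => t * laplacian (conv' ψ (gauss d t)) x / conv' ψ (gauss d t) x)
      (𝓝[>] (0 : ℝ)) (𝓝 0) := by
    have := hnum.div hden hne
    rw [zero_div] at this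
    exact this
  exact ⟨h1, by simpa using tendsto_const_nhds.add h1⟩
end
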